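/- Let M be a rooted tree (an indecomposable object). Then every nonzero subspace of H_≤M that is stable under the top-elimination operator E^top_A for every rooted forest A contains φ_∅. Consequently H_≤M is indecomposable: if H_≤M = U ⊕ W with U and W subspaces each stable under all the operators E^top_A, then U = 0 or W = 0. -/

import Mathlib

open scoped Classical

/-- Concrete (labeled) rooted trees: a root with a list of subtrees. -/
inductive RTree : Type
  | node : List RTree → RTree

/-- Shapes of admissible cuts: at each tree, either the full cut
(everything, including the root, goes to the pruned part `P`), or a choice of
an admissible cut of each child subtree.  A `full` occurring strictly inside
corresponds to cutting the edge above that vertex. -/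
inductive CutShape : Type
  | full
  | branch : List CutShape → CutShape

namespace CK

/-- Number of vertices of a forest. -/
def sizeL : List RTree → ℕ
  | [] => 0
  | .node l :: ts => 1 + sizeL l + sizeL ts

/-- All admissible cuts of a forest (a choice of admissible cut of each tree). -/
def cutsF : List RTree → List (List CutShape)
  | [] => [[]]
  | .node l :: ts =>
      (CutShape.full :: (cutsF l).map CutShape.branch).flatMap
        fun c => (cutsF ts).map (c :: ·)

/-- The root part `R_C(F)` of a cut. -/
def Rcut : List RTree → List CutShape → List RTree
  | [], _ => []
  | _ :: _, [] => []
  | .node _ :: ts, .full :: cs => Rcut ts cs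
  | .node l :: ts, .branch ds :: cs => RTree.node (Rcut l ds) :: Rcut ts cs

/-- The pruned part `P_C(F)` of a cut. -/
def Pcut : List RTree → List CutShape → List RTree
  | [], _ => []
  | _ :: _, [] => []
  | .node l :: ts, .full :: cs => RTree.node l :: Pcut ts cs
  | .node l :: ts, .branch ds :: cs => Pcut l ds ++ Pcut ts cs

/-- Number of `full`s occurring in a cut. -/
def fullsL : List CutShape → ℕ
  | [] => 0
  | .full :: cs => 1 + fullsL cs
  | .branch ds :: cs => fullsL ds + fullsL cs

/-- A list of concrete forests containing (representatives of) every forest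
with at most `n` vertices. -/
def forestsUpTo : ℕ → List (List RTree)
  | 0 => [[]]
  | n+1 => [] :: (forestsUpTo n).flatMap fun l => (forestsUpTo n).map fun F => RTree.node l :: F

/-- Isomorphism of rooted trees (non-planar): a root-preserving bijection, i.e.
the lists of subtrees agree up to permutation and isomorphism. -/
inductive Iso : RTree → RTree → Prop
  | node {l₁ l l₂ : List RTree} : List.Forall₂ Iso l₁ l → l.Perm l₂ → Iso (.node l₁) (.node l₂)

/-- Isomorphism classes of rooted trees. -/
abbrev TreeClass : Type := Quot Iso

/-- Isomorphism classes of rooted forests = multisets of tree classes.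
The empty forest is `0`. -/
abbrev ForestClass : Type := Multiset TreeClass

/-- Isomorphism class of a tree. -/
def clT (t : RTree) : TreeClass := Quot.mk _ t

/-- Isomorphism class of a forest. -/
def clF (F : List RTree) : ForestClass := (F.map clT : List TreeClass)

/-- A concrete representative of a forest class. -/
noncomputable def repF (M : ForestClass) : List RTree := M.toList.map Quot.out

/-- A concrete representative of a tree class. -/
noncomputable def repT (T : TreeClass) : RTree := T.out

/-- Number of vertices of a forest class. -/
noncomputable def sizeC (M : ForestClass) : ℕ := sizeL (repF M)

/-- Number of vertices of a tree class. -/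
noncomputable def sizeT (T : TreeClass) : ℕ := sizeL [repT T]

/-- The Hall algebra `H`: finitely supported ℚ-valued functions on
isomorphism classes of rooted forests, with basis the delta functions. -/
abbrev H : Type := ForestClass →₀ ℚ

/-- The basis element `δ_A` of `H`. -/
noncomputable def delta (A : ForestClass) : H := Finsupp.single A 1

/-- `n(A,B;M)`: the number of admissible cuts `C` of `M` with
`P_C(M) ≅ A` and `R_C(M) ≅ B`. -/
noncomputable def nCuts (A B M : ForestClass) : ℕ :=
  (cutsF (repF M)).countP fun c =>
    decide (clF (Pcut (repF M) c) = A ∧ clF (Rcut (repF M) c) = B)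

/-- A finite set of forest classes containing all classes with at most `n`
vertices. -/
noncomputable def forestCand (n : ℕ) : Finset ForestClass :=
  ((forestsUpTo n).map clF).toFinset

/-- A finite set of tree classes containing all classes with at most `n+1`
vertices. -/
noncomputable def treeCand (n : ℕ) : Finset TreeClass :=
  ((forestsUpTo n).map fun F => clT (RTree.node F)).toFinset

/-- The Hall product on basis elements: `δ_A × δ_B = Σ_M n(A,B;M)·δ_M`
(every `M` with `n(A,B;M) ≠ 0` has exactly `sizeC A + sizeC B` vertices). -/
noncomputable def mulBasis (A B : ForestClass) : H :=
  ∑ M ∈ forestCand (sizeC A + sizeC B), (nCuts A B M : ℚ) • delta M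

/-- The Hall product on `H`, extended bilinearly from basis elements. -/
noncomputable def hmul (f g : H) : H :=
  f.sum fun A a => g.sum fun B b => (a * b) • mulBasis A B

/-- The Connes-Kreimer Lie algebra `n_T` (as a vector space): the span of
isomorphism classes of rooted trees. -/
abbrev nT : Type := TreeClass →₀ ℚ

/-- The basis element of `n_T` corresponding to a rooted tree `T`. -/
noncomputable def tau (T : TreeClass) : nT := Finsupp.single T 1

/-- `a(T₁,T₂;T)`: the number of edges `e` of `T` such that the single-edge cut
at `e` has pruned part `≅ T₁` and root part `≅ T₂`. -/
noncomputable def aCount (T₁ T₂ T : TreeClass) : ℕ :=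
  (cutsF [repT T]).countP fun c =>
    decide (fullsL c = 1 ∧ clF (Pcut [repT T] c) = ({T₁} : Multiset TreeClass)
      ∧ clF (Rcut [repT T] c) = ({T₂} : Multiset TreeClass))

/-- The grafting (pre-Lie) product on basis elements:
`T₁ * T₂ = Σ_T a(T₁,T₂;T)·T`. -/
noncomputable def graftBasis (T₁ T₂ : TreeClass) : nT :=
  ∑ T ∈ treeCand (sizeT T₁ + sizeT T₂), (aCount T₁ T₂ T : ℚ) • tau T

/-- The grafting (pre-Lie) product on `n_T`, extended bilinearly. -/
noncomputable def graft (x y : nT) : nT :=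
  x.sum fun T₁ a => y.sum fun T₂ b => (a * b) • graftBasis T₁ T₂

/-- The Connes-Kreimer bracket `[x,y] = x*y - y*x` on `n_T`. -/
noncomputable def ckBracket (x y : nT) : nT := graft x y - graft y x

/-- `Ẽ_A δ_B = Σ_C δ_{R_C(B)}`, the sum over admissible cuts `C` of `B` with
`P_C(B) ≅ A`. -/
noncomputable def elimBasis (A B : ForestClass) : H :=
  (((cutsF (repF B)).filter fun c => decide (clF (Pcut (repF B) c) = A)).map
    fun c => delta (clF (Rcut (repF B) c))).sum

/-- The elimination operator `E_A` (here on `H ≅ H*`, identifying `φ_B` with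
`δ_B`). -/
noncomputable def elim (A : ForestClass) : H →ₗ[ℚ] H :=
  Finsupp.lsum ℚ fun B => LinearMap.toSpanSingleton ℚ H (elimBasis A B)

/-- `Ẽ^top_A δ_B = Σ_C δ_{P_C(B)}`, the sum over admissible cuts `C` of `B`
with `R_C(B) ≅ A`. -/
noncomputable def topElimBasis (A B : ForestClass) : H :=
  (((cutsF (repF B)).filter fun c => decide (clF (Rcut (repF B) c) = A)).map
    fun c => delta (clF (Pcut (repF B) c))).sum

/-- The top-elimination operator `E^top_A`. -/
noncomputable def topElim (A : ForestClass) : H →ₗ[ℚ] H :=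
  Finsupp.lsum ℚ fun B => LinearMap.toSpanSingleton ℚ H (topElimBasis A B)

/-- `H ⊗ H`, realized as finitely supported functions on pairs of classes. -/
abbrev H2 : Type := (ForestClass × ForestClass) →₀ ℚ

/-- `Δ(δ_M) = Σ δ_A ⊗ δ_B`, the sum over ordered pairs `(A,B)` of classes with
`A ⊔ B ≅ M`. -/
noncomputable def deltaBasis (M : ForestClass) : H2 :=
  ∑ A ∈ M.powerset.toFinset, Finsupp.single (A, M - A) 1

/-- The coproduct `Δ : H → H ⊗ H`. -/
noncomputable def coprod : H →ₗ[ℚ] H2 :=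
  Finsupp.lsum ℚ fun M => LinearMap.toSpanSingleton ℚ H2 (deltaBasis M)

/-- `H_≤M`: the subspace of `H* ≅ H` spanned by
`{φ_{P_C(M)} : C an admissible cut of M}` (the subobjects of `M`). -/
noncomputable def Hle (M : ForestClass) : Submodule ℚ H :=
  Submodule.span ℚ
    {v : H | ∃ c ∈ cutsF (repF M), v = delta (clF (Pcut (repF M) c))}

section Aux

theorem sizeL_node_cons (l ts : List RTree) :
    sizeL (.node l :: ts) = 1 + sizeL l + sizeL ts := by simp [sizeL]

theorem sizeL_append : ∀ (a b : List RTree), sizeL (a ++ b) = sizeL a + sizeL b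
  | [], b => by simp [sizeL]
  | .node l :: ts, b => by
      rw [List.cons_append, sizeL_node_cons, sizeL_node_cons, sizeL_append ts b]; omega

theorem sizeL_cons (t : RTree) (F : List RTree) : sizeL (t :: F) = sizeL [t] + sizeL F := by
  cases t with
  | node l => simp [sizeL]

theorem sizeL_eq_zero {F : List RTree} (h : sizeL F = 0) : F = [] := by
  cases F with
  | nil => rfl
  | cons t ts => cases t; simp [sizeL] at h

theorem sizeL_eq_sum (F : List RTree) : sizeL F = (F.map fun t => sizeL [t]).sum := by
  induction F with
  | nil => simp [sizeL]
  | cons t ts ih => rw [sizeL_cons, ih]; simp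

theorem sizeL_mem_le {t : RTree} {F : List RTree} (h : t ∈ F) : sizeL [t] ≤ sizeL F := by
  rw [sizeL_eq_sum F]
  exact List.single_le_sum (fun _ _ => Nat.zero_le _) _ (List.mem_map_of_mem h)

theorem sizeL_perm {l₁ l₂ : List RTree} (h : l₁.Perm l₂) : sizeL l₁ = sizeL l₂ := by
  rw [sizeL_eq_sum, sizeL_eq_sum]
  exact ((h.map _).sum_eq)

theorem iso_size_aux : ∀ n : ℕ, ∀ a : RTree, sizeL [a] ≤ n → ∀ b, Iso a b → sizeL [a] = sizeL [b] := by
  intro n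
  induction n with
  | zero =>
    intro a ha
    cases a with
    | node l => simp [sizeL] at ha
  | succ n ih =>
    intro a ha b hiso
    have key : ∀ l₁ l : List RTree, List.Forall₂ Iso l₁ l →
        (∀ x ∈ l₁, sizeL [x] ≤ n) → sizeL l₁ = sizeL l := by
      intro l₁ l hf
      induction hf with
      | nil => intro _; rfl
      | @cons x y l₁' l' hxy h' ih' =>
        intro hb
        have hx : sizeL [x] = sizeL [y] := ih x (hb x (by simp)) y hxy
        have hrest : sizeL l₁' = sizeL l' := ih' (fun z hz => hb z (by simp [hz]))
        rw [sizeL_cons x l₁', sizeL_cons y l', hx, hrest]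
    cases hiso with
    | @node l₁ l l₂ h₁ h₂ =>
      have hb : ∀ x ∈ l₁, sizeL [x] ≤ n := by
        intro x hx
        have h1 := sizeL_mem_le hx
        simp [sizeL] at ha
        omega
      have hl : sizeL l₁ = sizeL l := key l₁ l h₁ hb
      have hl2 : sizeL l = sizeL l₂ := sizeL_perm h₂
      simp [sizeL, hl, hl2]

theorem iso_size {a b : RTree} (h : Iso a b) : sizeL [a] = sizeL [b] :=
  iso_size_aux (sizeL [a]) a le_rfl b h

/-- Size of a tree class, well-defined. -/
noncomputable def szC : TreeClass → ℕ :=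
  Quot.lift (fun t => sizeL [t]) fun _ _ h => iso_size h

theorem clF_repF (M : ForestClass) : clF (repF M) = M := by
  unfold clF repF
  rw [List.map_map]
  have : (clT ∘ Quot.out) = id := by
    funext q; exact Quot.out_eq q
  rw [this, List.map_id, Multiset.coe_toList]

theorem sizeL_eq_sum_szC (F : List RTree) : sizeL F = ((clF F).map szC).sum := by
  unfold clF
  rw [Multiset.map_coe, Multiset.sum_coe, List.map_map]
  rw [sizeL_eq_sum]
  rfl

theorem sizeC_eq_sum (M : ForestClass) : sizeC M = (M.map szC).sum := by
  rw [sizeC, sizeL_eq_sum_szC, clF_repF]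

theorem sizeL_of_clF {F : List RTree} {M : ForestClass} (h : clF F = M) :
    sizeL F = sizeC M := by
  rw [sizeL_eq_sum_szC, h, sizeC_eq_sum]

theorem mem_cutsF {l : List RTree} {ts : List RTree} {c : List CutShape} :
    c ∈ cutsF (.node l :: ts) ↔
      (∃ cs ∈ cutsF ts, c = .full :: cs) ∨
      (∃ ds ∈ cutsF l, ∃ cs ∈ cutsF ts, c = .branch ds :: cs) := by
  simp only [cutsF, List.mem_flatMap, List.mem_cons, List.mem_map]
  constructor
  · rintro ⟨d, hd | ⟨ds, hds, rfl⟩, cs, hcs, rfl⟩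
    · subst hd; exact Or.inl ⟨cs, hcs, rfl⟩
    · exact Or.inr ⟨ds, hds, cs, hcs, rfl⟩
  · rintro (⟨cs, hcs, rfl⟩ | ⟨ds, hds, cs, hcs, rfl⟩)
    · exact ⟨.full, Or.inl rfl, cs, hcs, rfl⟩
    · exact ⟨.branch ds, Or.inr ⟨ds, hds, rfl⟩, cs, hcs, rfl⟩

theorem size_cut_aux : ∀ n : ℕ, ∀ F : List RTree, sizeL F ≤ n → ∀ c ∈ cutsF F,
    sizeL (Pcut F c) + sizeL (Rcut F c) = sizeL F ∧ (Pcut F c = [] → Rcut F c = F) := by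
  intro n
  induction n with
  | zero =>
    intro F hF c hc
    have := sizeL_eq_zero (Nat.le_zero.mp hF)
    subst this
    simp [cutsF] at hc
    subst hc
    simp [Pcut, Rcut, sizeL]
  | succ n ih =>
    intro F hF c hc
    match F with
    | [] =>
      simp [cutsF] at hc; subst hc; simp [Pcut, Rcut, sizeL]
    | .node l :: ts =>
      have hsz : sizeL (.node l :: ts) = 1 + sizeL l + sizeL ts := by simp [sizeL]
      have hln : sizeL l ≤ n := by omega
      have htn : sizeL ts ≤ n := by omega
      rcases mem_cutsF.mp hc with ⟨cs, hcs, rfl⟩ | ⟨ds, hds, cs, hcs, rfl⟩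
      · have h1 := ih ts htn cs hcs
        simp only [Pcut, Rcut]
        constructor
        · rw [sizeL_cons (.node l)]
          have : sizeL [RTree.node l] = 1 + sizeL l := by simp [sizeL]
          omega
        · intro h; simp at h
      · have h1 := ih l hln ds hds
        have h2 := ih ts htn cs hcs
        simp only [Pcut, Rcut]
        constructor
        · rw [sizeL_append, sizeL_cons (.node _)]
          have : sizeL [RTree.node (Rcut l ds)] = 1 + sizeL (Rcut l ds) := by simp [sizeL]
          omega
        · intro h
          rw [List.append_eq_nil_iff] at h
          rw [h1.2 h.1, h2.2 h.2]

theorem size_cut {F : List RTree} {c : List CutShape} (hc : c ∈ cutsF F) :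
    sizeL (Pcut F c) + sizeL (Rcut F c) = sizeL F :=
  (size_cut_aux (sizeL F) F le_rfl c hc).1

theorem Rcut_of_Pcut_nil {F : List RTree} {c : List CutShape} (hc : c ∈ cutsF F)
    (h : Pcut F c = []) : Rcut F c = F :=
  (size_cut_aux (sizeL F) F le_rfl c hc).2 h

/-- The trivial cut. -/
def trivCut : List RTree → List CutShape
  | [] => []
  | .node l :: ts => .branch (trivCut l) :: trivCut ts

theorem trivCut_mem : ∀ F : List RTree, trivCut F ∈ cutsF F
  | [] => by simp [trivCut, cutsF]
  | .node l :: ts => by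
      have h1 := trivCut_mem l
      have h2 := trivCut_mem ts
      rw [trivCut]
      exact mem_cutsF.mpr (Or.inr ⟨_, h1, _, h2, rfl⟩)

theorem trivCut_P : ∀ F : List RTree, Pcut F (trivCut F) = []
  | [] => by simp [Pcut]
  | .node l :: ts => by
      rw [trivCut]
      simp only [Pcut]
      rw [trivCut_P l, trivCut_P ts]
      rfl

theorem trivCut_R : ∀ F : List RTree, Rcut F (trivCut F) = F
  | [] => by simp [Rcut]
  | .node l :: ts => by
      rw [trivCut]
      simp only [Rcut]
      rw [trivCut_R l, trivCut_R ts]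

theorem clF_nil : clF [] = 0 := rfl

theorem delta_zero_ne : delta 0 ≠ (0 : H) := by
  simp [delta, Finsupp.single_eq_zero]

end Aux

section Main

theorem cut_max {B B' : ForestClass} (hle : sizeC B' ≤ sizeC B)
    {c : List CutShape} (hc : c ∈ cutsF (repF B'))
    (hR : clF (Rcut (repF B') c) = B) :
    Pcut (repF B') c = [] ∧ B' = B := by
  have hs := size_cut hc
  have hsz : sizeL (Rcut (repF B') c) = sizeC B := sizeL_of_clF hR
  have hB' : sizeL (repF B') = sizeC B' := rfl
  have hP0 : sizeL (Pcut (repF B') c) = 0 := by omega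
  have hPnil : Pcut (repF B') c = [] := sizeL_eq_zero hP0
  refine ⟨hPnil, ?_⟩
  rw [Rcut_of_Pcut_nil hc hPnil, clF_repF] at hR
  exact hR

theorem topElim_key (w : H) (hw : w ≠ 0) :
    ∃ q : ℚ, q ≠ 0 ∧ ∃ B, topElim B w = q • delta 0 := by
  have hsupp : w.support.Nonempty := Finsupp.support_nonempty_iff.mpr hw
  obtain ⟨B, hB, hmax⟩ := w.support.exists_max_image sizeC hsupp
  have hbasis_ne : ∀ B' ∈ w.support, B' ≠ B → topElimBasis B B' = 0 := by
    intro B' h hne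
    unfold topElimBasis
    have hnil : (cutsF (repF B')).filter
        (fun c => decide (clF (Rcut (repF B') c) = B)) = [] := by
      rw [List.filter_eq_nil_iff]
      intro c hc hdec
      have hR : clF (Rcut (repF B') c) = B := of_decide_eq_true hdec
      exact hne ((cut_max (hmax B' h) hc hR).2)
    rw [hnil]
    simp
  have hBB : ∃ k : ℕ, 0 < k ∧ topElimBasis B B = (k : ℚ) • delta 0 := by
    set L := (cutsF (repF B)).filter
      (fun c => decide (clF (Rcut (repF B) c) = B)) with hL
    have htriv : trivCut (repF B) ∈ L := by
      rw [hL, List.mem_filter]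
      refine ⟨trivCut_mem _, decide_eq_true ?_⟩
      rw [trivCut_R, clF_repF]
    refine ⟨L.length, List.length_pos_iff.mpr (List.ne_nil_of_mem htriv), ?_⟩
    unfold topElimBasis
    rw [← hL]
    have hmapeq : L.map (fun c => delta (clF (Pcut (repF B) c)))
        = L.map (fun _ => delta 0) := by
      apply List.map_congr_left
      intro c hcL
      obtain ⟨hc, hdec⟩ := List.mem_filter.mp hcL
      have hR : clF (Rcut (repF B) c) = B := of_decide_eq_true hdec
      rw [(cut_max le_rfl hc hR).1, clF_nil]
    rw [hmapeq, List.map_const', List.sum_replicate]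
    exact (Nat.cast_smul_eq_nsmul ℚ _ _).symm
  obtain ⟨k, hk, hkeq⟩ := hBB
  have hsum : topElim B w = ∑ B' ∈ w.support, w B' • topElimBasis B B' := by
    simp [topElim, Finsupp.lsum_apply, Finsupp.sum, LinearMap.toSpanSingleton_apply]
  refine ⟨w B * k, mul_ne_zero (Finsupp.mem_support_iff.mp hB)
    (Nat.cast_ne_zero.mpr hk.ne'), B, ?_⟩
  rw [hsum, Finset.sum_eq_single_of_mem B hB
    (fun B' h hne => by rw [hbasis_ne B' h hne, smul_zero]), hkeq, smul_smul]

theorem delta0_mem (U : Submodule ℚ H)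
    (hstab : ∀ A : ForestClass, ∀ w ∈ U, topElim A w ∈ U) (hne : U ≠ ⊥) :
    delta 0 ∈ U := by
  obtain ⟨w, hwU, hw0⟩ := (Submodule.ne_bot_iff U).mp hne
  obtain ⟨q, hq, B, heq⟩ := topElim_key w hw0
  have h1 := hstab B w hwU
  rw [heq] at h1
  have h2 := U.smul_mem q⁻¹ h1
  rwa [smul_smul, inv_mul_cancel₀ hq, one_smul] at h2

end Main

/-- STATEMENT 18: for `M` a rooted tree (an indecomposable object), every
nonzero subspace of `H_≤M` stable under all top-elimination operators
`E^top_A` contains `φ_∅`; consequently `H_≤M` is indecomposable: it is not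
the direct sum of two nonzero stable subspaces. -/
theorem Hle_indecomposable (M : TreeClass) :
    (∀ U : Submodule ℚ H, U ≤ Hle ({M} : Multiset TreeClass) →
      (∀ A : ForestClass, ∀ w ∈ U, topElim A w ∈ U) → U ≠ ⊥ → delta 0 ∈ U) ∧
    (∀ U W : Submodule ℚ H,
      U ≤ Hle ({M} : Multiset TreeClass) → W ≤ Hle ({M} : Multiset TreeClass) →
      (∀ A : ForestClass, ∀ w ∈ U, topElim A w ∈ U) →
      (∀ A : ForestClass, ∀ w ∈ W, topElim A w ∈ W) →
      U ⊓ W = ⊥ → U ⊔ W = Hle ({M} : Multiset TreeClass) →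
      U = ⊥ ∨ W = ⊥) := by
  constructor
  · intro U _ hstab hne
    exact delta0_mem U hstab hne
  · intro U W _ _ hsU hsW hinf _
    by_contra hcon
    push_neg at hcon
    have h1 := delta0_mem U hsU hcon.1
    have h2 := delta0_mem W hsW hcon.2
    have hm : delta 0 ∈ U ⊓ W := ⟨h1, h2⟩
    rw [hinf, Submodule.mem_bot] at hm
    exact delta_zero_ne hm

end CK
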